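/- arXiv:0904.0069 — 5 statements merged into one kernel-verified Lean document; each statement's English description precedes it below -/
import Mathlib

section
/- Let (C̄¹,d̄¹) be a strong deformation retract of a complex (C¹,d¹) of F2-vector spaces, with inclusion j, retraction r and normalized homotopy h (i.e. h∘h = 0, r∘h = 0, h∘j = 0). Let f : (C⁰,d⁰) → (C¹,d¹) be a morphism of complexes. Then Cone(r∘f) is a strong deformation retract of Cone(f), with retraction R(x,y) = (x, r y), inclusion J(x,y) = (x, h(f(x)) + j(y)), and homotopy H(x,y) = (0, h(y)); moreover this homotopy is normalized: H∘H = 0, R∘H = 0 and H∘J = 0. -/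
/-!
STATEMENT 0: if (C̄¹,d̄¹) is a strong deformation retract of (C¹,d¹) with inclusion j,
retraction r and normalized homotopy h, and f : (C⁰,d⁰) → (C¹,d¹) is a morphism of
complexes of ℤ/2-vector spaces, then Cone(r∘f) is a strong deformation retract of Cone(f)
with retraction R(x,y) = (x, r y), inclusion J(x,y) = (x, h(f x) + j y) and normalized
homotopy H(x,y) = (0, h y).

We index the cone so that the piece of (true) degree `i+1`, namely `C⁰_{i+1} × C¹_i`,
is indexed by `i`; all statements are quantified over all `i : ℤ`, which covers all degrees.
-/

lemma addself {M : Type*} [AddCommGroup M] [Module (ZMod 2) M] (x : M) : x + x = 0 := by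
  have h : (2 : ZMod 2) • x = x + x := two_smul _ x
  rw [show (2:ZMod 2) = 0 from rfl, zero_smul] at h
  exact h.symm

lemma nsmul2 {M : Type*} [AddCommGroup M] [Module (ZMod 2) M] (x : M) : (2:ℕ) • x = 0 := by
  rw [two_nsmul]; exact addself x

lemma zsmul2 {M : Type*} [AddCommGroup M] [Module (ZMod 2) M] (x : M) : (2:ℤ) • x = 0 := by
  rw [two_zsmul]; exact addself x


/-- The differential of the cone of a morphism of complexes `f : (C0,d0) → (C1,d1)`,
from the piece `C0 (i+1) × C1 i` (of degree `i+1`) to the piece of degree `i+2`. -/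
def coneD (C0 C1 : ℤ → Type)
    [∀ i, AddCommGroup (C0 i)] [∀ i, Module (ZMod 2) (C0 i)]
    [∀ i, AddCommGroup (C1 i)] [∀ i, Module (ZMod 2) (C1 i)]
    (d0 : ∀ i, C0 i →ₗ[ZMod 2] C0 (i+1))
    (d1 : ∀ i, C1 i →ₗ[ZMod 2] C1 (i+1))
    (f : ∀ i, C0 i →ₗ[ZMod 2] C1 i) (i : ℤ) :
    (C0 (i+1) × C1 i) →ₗ[ZMod 2] (C0 (i+1+1) × C1 (i+1)) :=
  LinearMap.prod ((d0 (i+1)) ∘ₗ (LinearMap.fst (ZMod 2) (C0 (i+1)) (C1 i)))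
    (((f (i+1)) ∘ₗ (LinearMap.fst (ZMod 2) (C0 (i+1)) (C1 i))) +
      ((d1 i) ∘ₗ (LinearMap.snd (ZMod 2) (C0 (i+1)) (C1 i))))

/-- The retraction `R(x,y) = (x, r y)` on cones. -/
def coneR (C0 C1 Cb : ℤ → Type)
    [∀ i, AddCommGroup (C0 i)] [∀ i, Module (ZMod 2) (C0 i)]
    [∀ i, AddCommGroup (C1 i)] [∀ i, Module (ZMod 2) (C1 i)]
    [∀ i, AddCommGroup (Cb i)] [∀ i, Module (ZMod 2) (Cb i)]
    (r : ∀ i, C1 i →ₗ[ZMod 2] Cb i) (i : ℤ) :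
    (C0 (i+1) × C1 i) →ₗ[ZMod 2] (C0 (i+1) × Cb i) :=
  LinearMap.prodMap LinearMap.id (r i)

/-- The inclusion `J(x,y) = (x, h (f x) + j y)` on cones. -/
def coneJ (C0 C1 Cb : ℤ → Type)
    [∀ i, AddCommGroup (C0 i)] [∀ i, Module (ZMod 2) (C0 i)]
    [∀ i, AddCommGroup (C1 i)] [∀ i, Module (ZMod 2) (C1 i)]
    [∀ i, AddCommGroup (Cb i)] [∀ i, Module (ZMod 2) (Cb i)]
    (f : ∀ i, C0 i →ₗ[ZMod 2] C1 i)
    (j : ∀ i, Cb i →ₗ[ZMod 2] C1 i)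
    (h : ∀ i, C1 (i+1) →ₗ[ZMod 2] C1 i) (i : ℤ) :
    (C0 (i+1) × Cb i) →ₗ[ZMod 2] (C0 (i+1) × C1 i) :=
  LinearMap.prod (LinearMap.fst (ZMod 2) (C0 (i+1)) (Cb i))
    (((h i) ∘ₗ (f (i+1)) ∘ₗ (LinearMap.fst (ZMod 2) (C0 (i+1)) (Cb i))) +
      ((j i) ∘ₗ (LinearMap.snd (ZMod 2) (C0 (i+1)) (Cb i))))

/-- The homotopy `H(x,y) = (0, h y)` on cones. -/
def coneH (C0 C1 : ℤ → Type)
    [∀ i, AddCommGroup (C0 i)] [∀ i, Module (ZMod 2) (C0 i)]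
    [∀ i, AddCommGroup (C1 i)] [∀ i, Module (ZMod 2) (C1 i)]
    (h : ∀ i, C1 (i+1) →ₗ[ZMod 2] C1 i) (i : ℤ) :
    (C0 (i+1+1) × C1 (i+1)) →ₗ[ZMod 2] (C0 (i+1) × C1 i) :=
  LinearMap.prod 0 ((h i) ∘ₗ (LinearMap.snd (ZMod 2) (C0 (i+1+1)) (C1 (i+1))))

theorem stmt_0 (C0 C1 Cb : ℤ → Type)
    [∀ i, AddCommGroup (C0 i)] [∀ i, Module (ZMod 2) (C0 i)]
    [∀ i, AddCommGroup (C1 i)] [∀ i, Module (ZMod 2) (C1 i)]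
    [∀ i, AddCommGroup (Cb i)] [∀ i, Module (ZMod 2) (Cb i)]
    -- the three complexes
    (d0 : ∀ i, C0 i →ₗ[ZMod 2] C0 (i+1))
    (d1 : ∀ i, C1 i →ₗ[ZMod 2] C1 (i+1))
    (db : ∀ i, Cb i →ₗ[ZMod 2] Cb (i+1))
    (hd0 : ∀ i, (d0 (i+1)) ∘ₗ (d0 i) = 0)
    (hd1 : ∀ i, (d1 (i+1)) ∘ₗ (d1 i) = 0)
    (hdb : ∀ i, (db (i+1)) ∘ₗ (db i) = 0)
    -- (C̄¹,d̄¹) = (Cb,db) is a strong deformation retract of (C¹,d¹) = (C1,d1)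
    (j : ∀ i, Cb i →ₗ[ZMod 2] C1 i)
    (r : ∀ i, C1 i →ₗ[ZMod 2] Cb i)
    (h : ∀ i, C1 (i+1) →ₗ[ZMod 2] C1 i)
    (hjchain : ∀ i, (d1 i) ∘ₗ (j i) = (j (i+1)) ∘ₗ (db i))
    (hrchain : ∀ i, (db i) ∘ₗ (r i) = (r (i+1)) ∘ₗ (d1 i))
    (hrj : ∀ i, (r i) ∘ₗ (j i) = LinearMap.id)
    (hjr : ∀ i, (j (i+1)) ∘ₗ (r (i+1)) =
      LinearMap.id + (h (i+1)) ∘ₗ (d1 (i+1)) + (d1 i) ∘ₗ (h i))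
    -- the homotopy is normalized
    (hhh : ∀ i, (h i) ∘ₗ (h (i+1)) = 0)
    (hrh : ∀ i, (r i) ∘ₗ (h i) = 0)
    (hhj : ∀ i, (h i) ∘ₗ (j (i+1)) = 0)
    -- a morphism of complexes f : (C⁰,d⁰) → (C¹,d¹)
    (f : ∀ i, C0 i →ₗ[ZMod 2] C1 i)
    (hfchain : ∀ i, (d1 i) ∘ₗ (f i) = (f (i+1)) ∘ₗ (d0 i)) :
    -- Cone(r∘f) is a complex and a strong deformation retract of Cone(f)
    (∀ i, (coneD C0 C1 d0 d1 f (i+1)) ∘ₗ (coneD C0 C1 d0 d1 f i) = 0) ∧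
    (∀ i, (coneD C0 Cb d0 db (fun i => (r i) ∘ₗ (f i)) (i+1)) ∘ₗ
        (coneD C0 Cb d0 db (fun i => (r i) ∘ₗ (f i)) i) = 0) ∧
    -- R is a morphism of complexes
    (∀ i, (coneD C0 Cb d0 db (fun i => (r i) ∘ₗ (f i)) i) ∘ₗ (coneR C0 C1 Cb r i) =
      (coneR C0 C1 Cb r (i+1)) ∘ₗ (coneD C0 C1 d0 d1 f i)) ∧
    -- J is a morphism of complexes
    (∀ i, (coneD C0 C1 d0 d1 f i) ∘ₗ (coneJ C0 C1 Cb f j h i) =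
      (coneJ C0 C1 Cb f j h (i+1)) ∘ₗ (coneD C0 Cb d0 db (fun i => (r i) ∘ₗ (f i)) i)) ∧
    -- R ∘ J = id
    (∀ i, (coneR C0 C1 Cb r i) ∘ₗ (coneJ C0 C1 Cb f j h i) = LinearMap.id) ∧
    -- J ∘ R = id + H ∘ D + D ∘ H
    (∀ i, (coneJ C0 C1 Cb f j h (i+1)) ∘ₗ (coneR C0 C1 Cb r (i+1)) =
      LinearMap.id + (coneH C0 C1 h (i+1)) ∘ₗ (coneD C0 C1 d0 d1 f (i+1)) +
        (coneD C0 C1 d0 d1 f i) ∘ₗ (coneH C0 C1 h i)) ∧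
    -- the homotopy H is normalized
    (∀ i, (coneH C0 C1 h i) ∘ₗ (coneH C0 C1 h (i+1)) = 0) ∧
    (∀ i, (coneR C0 C1 Cb r i) ∘ₗ (coneH C0 C1 h i) = 0) ∧
    (∀ i, (coneH C0 C1 h i) ∘ₗ (coneJ C0 C1 Cb f j h (i+1)) = 0) := by
  have hd0' : ∀ k xx, d0 (k+1) (d0 k xx) = 0 := fun k xx => LinearMap.congr_fun (hd0 k) xx
  have hd1' : ∀ k xx, d1 (k+1) (d1 k xx) = 0 := fun k xx => LinearMap.congr_fun (hd1 k) xx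
  have hdb' : ∀ k xx, db (k+1) (db k xx) = 0 := fun k xx => LinearMap.congr_fun (hdb k) xx
  have hjc' : ∀ k xx, d1 k (j k xx) = j (k+1) (db k xx) := fun k xx => LinearMap.congr_fun (hjchain k) xx
  have hrc' : ∀ k xx, db k (r k xx) = r (k+1) (d1 k xx) := fun k xx => LinearMap.congr_fun (hrchain k) xx
  have hrj' : ∀ k xx, r k (j k xx) = xx := fun k xx => LinearMap.congr_fun (hrj k) xx
  have hjr' : ∀ k xx, j (k+1) (r (k+1) xx) = xx + h (k+1) (d1 (k+1) xx) + d1 k (h k xx) := fun k xx => LinearMap.congr_fun (hjr k) xx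
  have hhh' : ∀ k xx, h k (h (k+1) xx) = 0 := fun k xx => LinearMap.congr_fun (hhh k) xx
  have hrh' : ∀ k xx, r k (h k xx) = 0 := fun k xx => LinearMap.congr_fun (hrh k) xx
  have hhj' : ∀ k xx, h k (j (k+1) xx) = 0 := fun k xx => LinearMap.congr_fun (hhj k) xx
  have hfc' : ∀ k xx, d1 k (f k xx) = f (k+1) (d0 k xx) := fun k xx => LinearMap.congr_fun (hfchain k) xx
  refine ⟨?_, ?_, ?_, ?_, ?_, ?_, ?_, ?_, ?_⟩ <;> intro i <;>
    apply LinearMap.ext <;> rintro ⟨x, y⟩ <;>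
    simp only [coneD, coneR, coneJ, coneH, LinearMap.comp_apply, LinearMap.prod_apply,
      LinearMap.prodMap_apply, LinearMap.add_apply, LinearMap.zero_apply, LinearMap.id_apply,
      LinearMap.fst_apply, LinearMap.snd_apply, Function.prod, Prod.ext_iff, Prod.fst_zero,
      Prod.snd_zero, Prod.fst_add, Prod.snd_add, Prod.mk_add_mk, map_add, map_zero,
      zero_add, add_zero] <;>
    constructor <;>
    simp only [hd0', hd1', hdb', hjc', hrc', hrj', hjr', hhh', hrh', hhj', hfc',
      map_add, map_zero, zero_add, add_zero] <;>
    first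
      | rfl
      | (abel_nf; try simp [two_smul, two_nsmul, two_zsmul, nsmul2, zsmul2, addself])
end

section
/- The maps μ₂, δ₂, η₂, ε₂ defined on B via ι and π satisfy the explicit formulas μ₂(w₊⊗w₊)=w₊, μ₂(w₊⊗w₋)=μ₂(w₋⊗w₊)=w₋, μ₂(w₋⊗w₋)=0, δ₂(w₊)=w₊⊗w₋+w₋⊗w₊, δ₂(w₋)=w₋⊗w₋, η₂(1)=w₊, ε₂(w₊)=0, ε₂(w₋)=1, and they make B a commutative Frobenius algebra: μ₂∘φ₂ = μ₂, μ₂∘(μ₂⊗id_B) = μ₂∘(id_B⊗μ₂), μ₂∘(η₂⊗id_B) = id_B, φ₂∘δ₂ = δ₂, (δ₂⊗id_B)∘δ₂ = (id_B⊗δ₂)∘δ₂, (ε₂⊗id_B)∘δ₂ = id_B, and δ₂∘μ₂ = (μ₂⊗id_B)∘(id_B⊗δ₂). -/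
open TensorProduct

/-- the structure maps μ₂, δ₂, η₂, ε₂ induced on B via ι and π satisfy
explicit formulas and make B a commutative Frobenius algebra. -/
theorem stmt_8 (A : Type) [AddCommGroup A] [Module (ZMod 2) A]
    (B : Type) [AddCommGroup B] [Module (ZMod 2) B]
    (vm vp : A) (bA : Module.Basis (Fin 2) (ZMod 2) A)
    (hbA0 : bA 0 = vm) (hbA1 : bA 1 = vp)
    (wm wp : B) (bB : Module.Basis (Fin 2) (ZMod 2) B)
    (hbB0 : bB 0 = wm) (hbB1 : bB 1 = wp)
    (μ₁ : A ⊗[ZMod 2] A →ₗ[ZMod 2] A)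
    (hμpp : μ₁ (vp ⊗ₜ vp) = vp) (hμpm : μ₁ (vp ⊗ₜ vm) = vm)
    (hμmp : μ₁ (vm ⊗ₜ vp) = vm) (hμmm : μ₁ (vm ⊗ₜ vm) = 0)
    (η₁ : ZMod 2 →ₗ[ZMod 2] A) (hη₁ : η₁ 1 = vp)
    (δ₁ : A →ₗ[ZMod 2] A ⊗[ZMod 2] A)
    (hδp : δ₁ vp = vp ⊗ₜ vm + vm ⊗ₜ vp) (hδm : δ₁ vm = vm ⊗ₜ vm)
    (ε₁ : A →ₗ[ZMod 2] ZMod 2) (hε₁p : ε₁ vp = 0) (hε₁m : ε₁ vm = 1)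
    (φ₁ : A ⊗[ZMod 2] A →ₗ[ZMod 2] A ⊗[ZMod 2] A)
    (hφ₁ : ∀ x y : A, φ₁ (x ⊗ₜ y) = y ⊗ₜ x)
    (ι : B →ₗ[ZMod 2] A ⊗[ZMod 2] A)
    (hιp : ι wp = vp ⊗ₜ vp) (hιm : ι wm = vm ⊗ₜ vm)
    (π : A ⊗[ZMod 2] A →ₗ[ZMod 2] B)
    (hπpp : π (vp ⊗ₜ vp) = wp) (hπmm : π (vm ⊗ₜ vm) = wm)
    (hπpm : π (vp ⊗ₜ vm) = 0) (hπmp : π (vm ⊗ₜ vp) = 0)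
    -- the middle flip id⊗φ₁⊗id on (A⊗A)⊗(A⊗A)
    (mflip : (A ⊗[ZMod 2] A) ⊗[ZMod 2] (A ⊗[ZMod 2] A) →ₗ[ZMod 2]
      (A ⊗[ZMod 2] A) ⊗[ZMod 2] (A ⊗[ZMod 2] A))
    (hmflip : ∀ a a' c c' : A, mflip ((a ⊗ₜ a') ⊗ₜ (c ⊗ₜ c')) = (a ⊗ₜ c) ⊗ₜ (a' ⊗ₜ c'))
    (μ₂ : B ⊗[ZMod 2] B →ₗ[ZMod 2] B)
    (hμ₂ : μ₂ = π ∘ₗ (TensorProduct.map μ₁ μ₁) ∘ₗ mflip ∘ₗ (TensorProduct.map ι ι))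
    (δ₂ : B →ₗ[ZMod 2] B ⊗[ZMod 2] B)
    (hδ₂ : δ₂ = (TensorProduct.map π π) ∘ₗ mflip ∘ₗ (TensorProduct.map δ₁ δ₁) ∘ₗ ι)
    (η₂ : ZMod 2 →ₗ[ZMod 2] B)
    (hη₂ : η₂ = π ∘ₗ (TensorProduct.map η₁ η₁) ∘ₗ
      (TensorProduct.lid (ZMod 2) (ZMod 2)).symm.toLinearMap)
    (ε₂ : B →ₗ[ZMod 2] ZMod 2)
    (hε₂ : ε₂ = (TensorProduct.lid (ZMod 2) (ZMod 2)).toLinearMap ∘ₗ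
      (TensorProduct.map ε₁ ε₁) ∘ₗ ι)
    (φ₂ : B ⊗[ZMod 2] B →ₗ[ZMod 2] B ⊗[ZMod 2] B)
    (hφ₂ : ∀ x y : B, φ₂ (x ⊗ₜ y) = y ⊗ₜ x) :
    μ₂ (wp ⊗ₜ wp) = wp ∧ μ₂ (wp ⊗ₜ wm) = wm ∧ μ₂ (wm ⊗ₜ wp) = wm ∧ μ₂ (wm ⊗ₜ wm) = 0 ∧
    δ₂ wp = wp ⊗ₜ wm + wm ⊗ₜ wp ∧ δ₂ wm = wm ⊗ₜ wm ∧
    η₂ 1 = wp ∧ ε₂ wp = 0 ∧ ε₂ wm = 1 ∧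
    μ₂ ∘ₗ φ₂ = μ₂ ∧
    μ₂ ∘ₗ TensorProduct.map μ₂ LinearMap.id =
      (μ₂ ∘ₗ TensorProduct.map LinearMap.id μ₂) ∘ₗ
        (TensorProduct.assoc (ZMod 2) B B B).toLinearMap ∧
    μ₂ ∘ₗ TensorProduct.map η₂ LinearMap.id ∘ₗ
        (TensorProduct.lid (ZMod 2) B).symm.toLinearMap = LinearMap.id ∧
    φ₂ ∘ₗ δ₂ = δ₂ ∧
    (TensorProduct.assoc (ZMod 2) B B B).toLinearMap ∘ₗ
        (TensorProduct.map δ₂ LinearMap.id) ∘ₗ δ₂ =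
      (TensorProduct.map LinearMap.id δ₂) ∘ₗ δ₂ ∧
    (TensorProduct.lid (ZMod 2) B).toLinearMap ∘ₗ
        (TensorProduct.map ε₂ LinearMap.id) ∘ₗ δ₂ = LinearMap.id ∧
    δ₂ ∘ₗ μ₂ =
      (TensorProduct.map μ₂ LinearMap.id) ∘ₗ
        (TensorProduct.assoc (ZMod 2) B B B).symm.toLinearMap ∘ₗ
        (TensorProduct.map LinearMap.id δ₂) := by

  -- explicit values
  have hmpp : μ₂ (wp ⊗ₜ wp) = wp := by
    simp [hμ₂, hιp, hιm, hmflip, hμpp, hμpm, hμmp, hμmm, hπpp]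
  have hmpm : μ₂ (wp ⊗ₜ wm) = wm := by
    simp [hμ₂, hιp, hιm, hmflip, hμpp, hμpm, hμmp, hμmm, hπmm]
  have hmmp : μ₂ (wm ⊗ₜ wp) = wm := by
    simp [hμ₂, hιp, hιm, hmflip, hμpp, hμpm, hμmp, hμmm, hπmm]
  have hmmm : μ₂ (wm ⊗ₜ wm) = 0 := by
    simp [hμ₂, hιp, hιm, hmflip, hμpp, hμpm, hμmp, hμmm]
  have hdp : δ₂ wp = wp ⊗ₜ wm + wm ⊗ₜ wp := by
    simp [hδ₂, hιp, hδp, hδm, tmul_add, add_tmul, hmflip, hπpp, hπmm, hπpm, hπmp]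
  have hdm : δ₂ wm = wm ⊗ₜ wm := by
    simp [hδ₂, hιm, hδm, hmflip, hπmm]
  have hep : ε₂ wp = 0 := by
    simp [hε₂, hιp, hε₁p]
  have hem : ε₂ wm = 1 := by
    simp [hε₂, hιm, hε₁m]
  have hnu : η₂ 1 = wp := by
    simp [hη₂, hη₁, hπpp]
  refine ⟨hmpp, hmpm, hmmp, hmmm, hdp, hdm, hnu, hep, hem, ?_, ?_, ?_, ?_, ?_, ?_, ?_⟩
  · apply Module.Basis.ext (bB.tensorProduct bB)
    rintro ⟨i, j⟩
    fin_cases i <;> fin_cases j <;>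
      simp [-Prod.mk_zero_zero, -Prod.mk_one_one, Module.Basis.tensorProduct_apply, hbB0, hbB1, hφ₂, hmpp, hmpm, hmmp, hmmm]
  · apply Module.Basis.ext ((bB.tensorProduct bB).tensorProduct bB)
    rintro ⟨⟨i, j⟩, k⟩
    fin_cases i <;> fin_cases j <;> fin_cases k <;>
      simp [-Prod.mk_zero_zero, -Prod.mk_one_one, Module.Basis.tensorProduct_apply, hbB0, hbB1, hmpp, hmpm, hmmp, hmmm,
        tmul_add, add_tmul]
  · apply Module.Basis.ext bB
    intro i
    fin_cases i <;>
      simp [hbB0, hbB1, hnu, hmpp, hmpm]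
  · apply Module.Basis.ext bB
    intro i
    fin_cases i <;>
      simp [hbB0, hbB1, hφ₂, hdp, hdm, add_comm]
  · apply Module.Basis.ext bB
    intro i
    fin_cases i <;>
      simp [hbB0, hbB1, hdp, hdm, tmul_add, add_tmul] <;> abel
  · apply Module.Basis.ext bB
    intro i
    fin_cases i <;>
      simp [hbB0, hbB1, hdp, hdm, hep, hem, tmul_add, add_tmul]
  · apply Module.Basis.ext (bB.tensorProduct bB)
    rintro ⟨i, j⟩
    fin_cases i <;> fin_cases j <;>
      simp [-Prod.mk_zero_zero, -Prod.mk_one_one, Module.Basis.tensorProduct_apply, hbB0, hbB1, hdp, hdm, hmpp, hmpm, hmmp, hmmm,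
        tmul_add, add_tmul]
end

section
/- The maps T₁ and T₇ satisfy the commutation relations: (T₁⊗id_A)∘(id_A⊗T₁) = (id_A⊗T₁)∘(T₁⊗id_A) as maps A⊗A⊗A → A⊗A⊗A, and T₁∘(id_A⊗T₇) = (id_A⊗T₇)∘(T₁⊗id_A) as maps A⊗A⊗A → A⊗A. -/
open TensorProduct

/-- commutation relations for T₁ = δ₁∘μ₁ and T₇ = μ₁ on A⊗A⊗A. -/
theorem stmt_11 (A : Type) [AddCommGroup A] [Module (ZMod 2) A]
    (vm vp : A) (bA : Module.Basis (Fin 2) (ZMod 2) A)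
    (hbA0 : bA 0 = vm) (hbA1 : bA 1 = vp)
    (μ₁ : A ⊗[ZMod 2] A →ₗ[ZMod 2] A)
    (hμpp : μ₁ (vp ⊗ₜ vp) = vp) (hμpm : μ₁ (vp ⊗ₜ vm) = vm)
    (hμmp : μ₁ (vm ⊗ₜ vp) = vm) (hμmm : μ₁ (vm ⊗ₜ vm) = 0)
    (δ₁ : A →ₗ[ZMod 2] A ⊗[ZMod 2] A)
    (hδp : δ₁ vp = vp ⊗ₜ vm + vm ⊗ₜ vp) (hδm : δ₁ vm = vm ⊗ₜ vm) :
    (TensorProduct.map (δ₁ ∘ₗ μ₁) LinearMap.id) ∘ₗ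
        (TensorProduct.assoc (ZMod 2) A A A).symm.toLinearMap ∘ₗ
        (TensorProduct.map LinearMap.id (δ₁ ∘ₗ μ₁)) ∘ₗ
        (TensorProduct.assoc (ZMod 2) A A A).toLinearMap =
      (TensorProduct.assoc (ZMod 2) A A A).symm.toLinearMap ∘ₗ
        (TensorProduct.map LinearMap.id (δ₁ ∘ₗ μ₁)) ∘ₗ
        (TensorProduct.assoc (ZMod 2) A A A).toLinearMap ∘ₗ
        (TensorProduct.map (δ₁ ∘ₗ μ₁) LinearMap.id) ∧
    (δ₁ ∘ₗ μ₁) ∘ₗ (TensorProduct.map LinearMap.id μ₁) ∘ₗ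
        (TensorProduct.assoc (ZMod 2) A A A).toLinearMap =
      (TensorProduct.map LinearMap.id μ₁) ∘ₗ
        (TensorProduct.assoc (ZMod 2) A A A).toLinearMap ∘ₗ
        (TensorProduct.map (δ₁ ∘ₗ μ₁) LinearMap.id) := by
  refine ⟨Module.Basis.ext ((bA.tensorProduct bA).tensorProduct bA) ?_,
    Module.Basis.ext ((bA.tensorProduct bA).tensorProduct bA) ?_⟩ <;>
  · rintro ⟨⟨i, j⟩, k⟩
    fin_cases i <;> fin_cases j <;> fin_cases k <;>
      simp [Module.Basis.tensorProduct_apply, hbA0, hbA1, TensorProduct.tmul_add,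
        TensorProduct.add_tmul, hμpp, hμpm, hμmp, hμmm, hδp, hδm, -Prod.mk_zero_zero, -Prod.mk_one_one, add_assoc]
end

section
/- The maps T₁, T₂ and T₃ satisfy: (id_A⊗T₂)∘T₁ = (T₁⊗id_B)∘(id_A⊗T₂) as maps A⊗A → A⊗A⊗B, and T₁∘(id_A⊗T₃) = (id_A⊗T₃)∘(T₁⊗id_B) as maps A⊗A⊗B → A⊗A. -/
open TensorProduct

/-- commutation relations for T₁ = δ₁∘μ₁ with T₂ and T₃. -/
theorem stmt_12 (A : Type) [AddCommGroup A] [Module (ZMod 2) A]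
    (B : Type) [AddCommGroup B] [Module (ZMod 2) B]
    (vm vp : A) (bA : Module.Basis (Fin 2) (ZMod 2) A)
    (hbA0 : bA 0 = vm) (hbA1 : bA 1 = vp)
    (wm wp : B) (bB : Module.Basis (Fin 2) (ZMod 2) B)
    (hbB0 : bB 0 = wm) (hbB1 : bB 1 = wp)
    (μ₁ : A ⊗[ZMod 2] A →ₗ[ZMod 2] A)
    (hμpp : μ₁ (vp ⊗ₜ vp) = vp) (hμpm : μ₁ (vp ⊗ₜ vm) = vm)
    (hμmp : μ₁ (vm ⊗ₜ vp) = vm) (hμmm : μ₁ (vm ⊗ₜ vm) = 0)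
    (δ₁ : A →ₗ[ZMod 2] A ⊗[ZMod 2] A)
    (hδp : δ₁ vp = vp ⊗ₜ vm + vm ⊗ₜ vp) (hδm : δ₁ vm = vm ⊗ₜ vm)
    (T₂ : A →ₗ[ZMod 2] A ⊗[ZMod 2] B)
    (hT₂p : T₂ vp = vp ⊗ₜ wm) (hT₂m : T₂ vm = vm ⊗ₜ wm)
    (T₃ : A ⊗[ZMod 2] B →ₗ[ZMod 2] A)
    (hT₃pp : T₃ (vp ⊗ₜ wp) = vp) (hT₃mp : T₃ (vm ⊗ₜ wp) = vm)
    (hT₃pm : T₃ (vp ⊗ₜ wm) = 0) (hT₃mm : T₃ (vm ⊗ₜ wm) = 0) :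
    (TensorProduct.map LinearMap.id T₂) ∘ₗ (δ₁ ∘ₗ μ₁) =
      (TensorProduct.assoc (ZMod 2) A A B).toLinearMap ∘ₗ
        (TensorProduct.map (δ₁ ∘ₗ μ₁) LinearMap.id) ∘ₗ
        (TensorProduct.assoc (ZMod 2) A A B).symm.toLinearMap ∘ₗ
        (TensorProduct.map LinearMap.id T₂) ∧
    (δ₁ ∘ₗ μ₁) ∘ₗ (TensorProduct.map LinearMap.id T₃) =
      (TensorProduct.map LinearMap.id T₃) ∘ₗ
        (TensorProduct.assoc (ZMod 2) A A B).toLinearMap ∘ₗ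
        (TensorProduct.map (δ₁ ∘ₗ μ₁) LinearMap.id) ∘ₗ
        (TensorProduct.assoc (ZMod 2) A A B).symm.toLinearMap := by

  subst hbA0 hbA1 hbB0 hbB1
  constructor
  · apply Module.Basis.ext (bA.tensorProduct bA)
    rintro ⟨i, j⟩
    fin_cases i <;> fin_cases j <;>
      simp [Module.Basis.tensorProduct_apply, Module.Basis.tensorProduct_apply', hμpp, hμpm, hμmp, hμmm, hδp, hδm,
        hT₂p, hT₂m, tmul_add, add_tmul]
  · apply Module.Basis.ext (bA.tensorProduct (bA.tensorProduct bB))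
    rintro ⟨i, j, k⟩
    fin_cases i <;> fin_cases j <;> fin_cases k <;>
      simp [Module.Basis.tensorProduct_apply, Module.Basis.tensorProduct_apply', hμpp, hμpm, hμmp, hμmm, hδp, hδm,
        hT₃pp, hT₃mp, hT₃pm, hT₃mm, tmul_add, add_tmul]
end

section
/- The maps T₂, T₃, T₄, T₅ satisfy, as maps A⊗B → A⊗B: T₂∘T₃ = (T₃⊗id_B)∘(id_A⊗φ₂)∘(T₂⊗id_B) = (T₃⊗id_B)∘(id_A⊗T₄) = (id_A⊗T₅)∘(T₂⊗id_B). -/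
open TensorProduct

/-- relations between T₂, T₃, T₄, T₅ as maps A⊗B → A⊗B. -/
theorem stmt_15 (A : Type) [AddCommGroup A] [Module (ZMod 2) A]
    (B : Type) [AddCommGroup B] [Module (ZMod 2) B]
    (vm vp : A) (bA : Module.Basis (Fin 2) (ZMod 2) A)
    (hbA0 : bA 0 = vm) (hbA1 : bA 1 = vp)
    (wm wp : B) (bB : Module.Basis (Fin 2) (ZMod 2) B)
    (hbB0 : bB 0 = wm) (hbB1 : bB 1 = wp)
    (φ₂ : B ⊗[ZMod 2] B →ₗ[ZMod 2] B ⊗[ZMod 2] B)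
    (hφ₂ : ∀ x y : B, φ₂ (x ⊗ₜ y) = y ⊗ₜ x)
    (T₂ : A →ₗ[ZMod 2] A ⊗[ZMod 2] B)
    (hT₂p : T₂ vp = vp ⊗ₜ wm) (hT₂m : T₂ vm = vm ⊗ₜ wm)
    (T₃ : A ⊗[ZMod 2] B →ₗ[ZMod 2] A)
    (hT₃pp : T₃ (vp ⊗ₜ wp) = vp) (hT₃mp : T₃ (vm ⊗ₜ wp) = vm)
    (hT₃pm : T₃ (vp ⊗ₜ wm) = 0) (hT₃mm : T₃ (vm ⊗ₜ wm) = 0)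
    (T₄ : B →ₗ[ZMod 2] B ⊗[ZMod 2] B)
    (hT₄p : T₄ wp = wp ⊗ₜ wm + wm ⊗ₜ wp) (hT₄m : T₄ wm = wm ⊗ₜ wm)
    (T₅ : B ⊗[ZMod 2] B →ₗ[ZMod 2] B)
    (hT₅pp : T₅ (wp ⊗ₜ wp) = wp) (hT₅pm : T₅ (wp ⊗ₜ wm) = wm)
    (hT₅mp : T₅ (wm ⊗ₜ wp) = wm) (hT₅mm : T₅ (wm ⊗ₜ wm) = 0) :
    T₂ ∘ₗ T₃ =
      (TensorProduct.map T₃ LinearMap.id) ∘ₗ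
        (TensorProduct.assoc (ZMod 2) A B B).symm.toLinearMap ∘ₗ
        (TensorProduct.map LinearMap.id φ₂) ∘ₗ
        (TensorProduct.assoc (ZMod 2) A B B).toLinearMap ∘ₗ
        (TensorProduct.map T₂ LinearMap.id) ∧
    T₂ ∘ₗ T₃ =
      (TensorProduct.map T₃ LinearMap.id) ∘ₗ
        (TensorProduct.assoc (ZMod 2) A B B).symm.toLinearMap ∘ₗ
        (TensorProduct.map LinearMap.id T₄) ∧
    T₂ ∘ₗ T₃ =
      (TensorProduct.map LinearMap.id T₅) ∘ₗ
        (TensorProduct.assoc (ZMod 2) A B B).toLinearMap ∘ₗ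
        (TensorProduct.map T₂ LinearMap.id) := by
  subst hbA0 hbA1 hbB0 hbB1
  refine ⟨?_, ?_, ?_⟩ <;>
  · apply (bA.tensorProduct bB).ext
    rintro ⟨i, j⟩
    fin_cases i <;> fin_cases j <;>
      simp [Module.Basis.tensorProduct_apply, Module.Basis.tensorProduct_apply', hφ₂, hT₂p, hT₂m, hT₃pp, hT₃mp, hT₃pm,
        hT₃mm, hT₄p, hT₄m, hT₅pp, hT₅pm, hT₅mp, hT₅mm, TensorProduct.tmul_add,
        TensorProduct.add_tmul]
end
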